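/- Let a, b : [0,T] → [0,∞) be integrable with b continuous, and suppose b(t) ≤ C₁ ∫₀ᵗ b(s) ds + C₂ ∫₀ᵗ √(b(s)) · √(sup_{r ≤ s} b(r)) ds for all t, where C₁, C₂ ≥ 0. If b is bounded on [0,T] and b(0) = 0, then sup_{t ≤ T} b(t) ≤ (C₁ + C₂) ∫₀ᵀ sup_{r ≤ s} b(r) ds, and consequently b ≡ 0 on [0,T]. -/

import Mathlib

set_option maxHeartbeats 1000000

open Set MeasureTheory intervalIntegral

theorem stmt_10 (T : ℝ) (hT : 0 < T) (b : ℝ → ℝ)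
    (hcont : ContinuousOn b (Icc 0 T))
    (hnonneg : ∀ t ∈ Icc (0:ℝ) T, 0 ≤ b t)
    (hint : IntegrableOn b (Icc 0 T))
    (M : ℝ) (hbdd : ∀ t ∈ Icc (0:ℝ) T, b t ≤ M)
    (hb0 : b 0 = 0)
    (C₁ C₂ : ℝ) (hC₁ : 0 ≤ C₁) (hC₂ : 0 ≤ C₂)
    (hineq : ∀ t ∈ Icc (0:ℝ) T, b t ≤
      C₁ * ∫ s in (0:ℝ)..t, b s
      + C₂ * ∫ s in (0:ℝ)..t, Real.sqrt (b s) * Real.sqrt (sSup (b '' Icc 0 s))) :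
    (sSup (b '' Icc 0 T) ≤ (C₁ + C₂) * ∫ s in (0:ℝ)..T, sSup (b '' Icc 0 s)) ∧
    ∀ t ∈ Icc (0:ℝ) T, b t = 0 := by
  have hM0 : 0 ≤ M := hb0 ▸ hbdd 0 ⟨le_rfl, hT.le⟩
  set K : ℝ := C₁ * (1 + C₂ * T) with hKdef
  have hK0 : 0 ≤ K :=
    mul_nonneg hC₁ (by positivity)
  clear_value K
  set S : ℝ → ℝ := fun t => sSup (b '' Icc 0 (min t T)) with hSdef
  have hne : ∀ t : ℝ, 0 ≤ t → (b '' Icc 0 (min t T)).Nonempty := fun t ht =>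
    ⟨b 0, 0, ⟨le_rfl, le_min ht hT.le⟩, rfl⟩
  have hbd : ∀ t : ℝ, ∀ x ∈ b '' Icc 0 (min t T), x ≤ M := by
    rintro t _ ⟨s, hs, rfl⟩
    exact hbdd s ⟨hs.1, hs.2.trans (min_le_right _ _)⟩
  have hbdd' : ∀ t : ℝ, BddAbove (b '' Icc 0 (min t T)) := fun t => ⟨M, fun x hx => hbd t x hx⟩
  have hemp : ∀ t : ℝ, t < 0 → Icc (0:ℝ) (min t T) = ∅ := by
    intro t ht
    exact Icc_eq_empty (fun hc => (not_le.mpr ht) ((le_min_iff.mp hc).1))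
  have hSnonneg : ∀ t : ℝ, 0 ≤ S t := by
    intro t
    by_cases h : 0 ≤ t
    · have := le_csSup (hbdd' t) ⟨0, ⟨le_rfl, le_min h hT.le⟩, rfl⟩
      rw [hb0] at this; exact this
    · push_neg at h
      simp only [hSdef, hemp t h, image_empty, Real.sSup_empty, le_refl]
  have hSM : ∀ t : ℝ, S t ≤ M := by
    intro t
    by_cases h : 0 ≤ t
    · exact csSup_le (hne t h) (hbd t)
    · push_neg at h
      simp only [hSdef, hemp t h, image_empty, Real.sSup_empty]
      exact hM0
  have hmono : Monotone S := by
    intro t t' htt'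
    by_cases h : 0 ≤ t
    · exact csSup_le_csSup (hbdd' t') (hne t h)
        (image_mono (Icc_subset_Icc_right (min_le_min htt' le_rfl)))
    · push_neg at h
      simp only [hSdef, hemp t h, image_empty, Real.sSup_empty]
      exact hSnonneg t'
  have hSint : ∀ u v : ℝ, IntervalIntegrable S volume u v := fun u v =>
    (hmono.monotoneOn _).intervalIntegrable
  have hSeq : ∀ s ∈ Icc (0:ℝ) T, S s = sSup (b '' Icc 0 s) := by
    intro s hs
    simp only [hSdef, min_eq_left hs.2]
  have hbS : ∀ t ∈ Icc (0:ℝ) T, ∀ s ∈ Icc (0:ℝ) t, b s ≤ S t := by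
    intro t ht s hs
    exact le_csSup (hbdd' t) ⟨s, ⟨hs.1, le_min hs.2 (hs.2.trans ht.2)⟩, rfl⟩
  have hbint : ∀ t ∈ Icc (0:ℝ) T, IntervalIntegrable b volume 0 t := by
    intro t ht
    have h1 : IntegrableOn b (uIcc 0 t) volume := by
      rw [uIcc_of_le ht.1]
      exact hint.mono_set (Icc_subset_Icc_right ht.2)
    exact h1.intervalIntegrable
  -- integrability of sqrt(b)*sqrt(S)
  have hgint : ∀ t ∈ Icc (0:ℝ) T, IntervalIntegrable
      (fun s => Real.sqrt (b s) * Real.sqrt (S s)) volume 0 t := by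
    intro t ht
    have hb_ae : AEMeasurable b (volume.restrict (Icc 0 t)) :=
      (hcont.aemeasurable measurableSet_Icc).mono_measure
        (Measure.restrict_mono (Icc_subset_Icc_right ht.2) le_rfl)
    have hmeas : AEStronglyMeasurable (fun s => Real.sqrt (b s) * Real.sqrt (S s))
        (volume.restrict (Icc 0 t)) := by
      exact ((Real.continuous_sqrt.measurable.comp_aemeasurable hb_ae).mul
        ((Real.continuous_sqrt.measurable.comp hmono.measurable).aemeasurable)).aestronglyMeasurable
    have hbound : ∀ᵐ s ∂(volume.restrict (Icc (0:ℝ) t)),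
        ‖Real.sqrt (b s) * Real.sqrt (S s)‖ ≤ M := by
      filter_upwards [ae_restrict_mem measurableSet_Icc] with s hs
      have h1 : Real.sqrt (b s) ≤ Real.sqrt M :=
        Real.sqrt_le_sqrt (hbdd s ⟨hs.1, hs.2.trans ht.2⟩)
      have h2 : Real.sqrt (S s) ≤ Real.sqrt M := Real.sqrt_le_sqrt (hSM s)
      have h3 : (0:ℝ) ≤ Real.sqrt (b s) * Real.sqrt (S s) :=
        mul_nonneg (Real.sqrt_nonneg _) (Real.sqrt_nonneg _)
      rw [Real.norm_of_nonneg h3]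
      calc Real.sqrt (b s) * Real.sqrt (S s) ≤ Real.sqrt M * Real.sqrt M :=
            mul_le_mul h1 h2 (Real.sqrt_nonneg _) (Real.sqrt_nonneg _)
        _ = M := Real.mul_self_sqrt hM0
    have hI : IntegrableOn (fun s => Real.sqrt (b s) * Real.sqrt (S s)) (uIcc 0 t) volume := by
      rw [uIcc_of_le ht.1]
      exact Integrable.mono' (integrable_const M) hmeas hbound
    exact hI.intervalIntegrable
  -- key inequality : b t ≤ K * ∫₀ᵗ S
  have hkey : ∀ t ∈ Icc (0:ℝ) T, b t ≤ K * ∫ s in (0:ℝ)..t, S s := by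
    intro t ht
    set J : ℝ := ∫ s in (0:ℝ)..t, Real.sqrt (b s) * Real.sqrt (sSup (b '' Icc 0 s)) with hJdef
    have hIS0 : (0:ℝ) ≤ ∫ s in (0:ℝ)..t, S s :=
      intervalIntegral.integral_nonneg ht.1 (fun s _ => hSnonneg s)
    have h1 : (∫ s in (0:ℝ)..t, b s) ≤ ∫ s in (0:ℝ)..t, S s :=
      integral_mono_on ht.1 (hbint t ht) (hSint 0 t)
        (fun s hs => hbS s ⟨hs.1, hs.2.trans ht.2⟩ s ⟨hs.1, le_rfl⟩)
    have hcg : J = ∫ s in (0:ℝ)..t, Real.sqrt (b s) * Real.sqrt (S s) := by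
      rw [hJdef]
      apply intervalIntegral.integral_congr
      intro s hs
      rw [uIcc_of_le ht.1] at hs
      dsimp only
      rw [hSeq s ⟨hs.1, hs.2.trans ht.2⟩]
    have hJ0 : 0 ≤ J := by
      rw [hcg]
      exact intervalIntegral.integral_nonneg ht.1
        (fun s _ => mul_nonneg (Real.sqrt_nonneg _) (Real.sqrt_nonneg _))
    have h2 : J ≤ ∫ s in (0:ℝ)..t, S s := by
      rw [hcg]
      apply integral_mono_on ht.1 (hgint t ht) (hSint 0 t)
      intro s hs
      have hsT : s ∈ Icc (0:ℝ) T := ⟨hs.1, hs.2.trans ht.2⟩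
      calc Real.sqrt (b s) * Real.sqrt (S s) ≤ Real.sqrt (S s) * Real.sqrt (S s) :=
            mul_le_mul_of_nonneg_right (Real.sqrt_le_sqrt (hbS s hsT s ⟨hs.1, le_rfl⟩))
              (Real.sqrt_nonneg _)
        _ = S s := Real.mul_self_sqrt (hSnonneg s)
    have hadd : (∫ s in (0:ℝ)..t, (b s + C₂ * J)) = (∫ s in (0:ℝ)..t, b s) + t * (C₂ * J) := by
      rw [intervalIntegral.integral_add (hbint t ht) intervalIntegrable_const,
        intervalIntegral.integral_const]
      simp [smul_eq_mul]
    have hstart : b t ≤ C₁ * ∫ s in (0:ℝ)..t, (b s + C₂ * J) := hineq t ht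
    calc b t ≤ C₁ * ((∫ s in (0:ℝ)..t, b s) + t * (C₂ * J)) := by rwa [hadd] at hstart
      _ ≤ C₁ * ((∫ s in (0:ℝ)..t, S s) + T * (C₂ * (∫ s in (0:ℝ)..t, S s))) := by
          refine mul_le_mul_of_nonneg_left (add_le_add h1 ?_) hC₁
          exact mul_le_mul ht.2 (mul_le_mul_of_nonneg_left h2 hC₂)
            (mul_nonneg hC₂ hJ0) hT.le
      _ = K * ∫ s in (0:ℝ)..t, S s := by rw [hKdef]; ring
  have hSkey : ∀ t ∈ Icc (0:ℝ) T, S t ≤ K * ∫ s in (0:ℝ)..t, S s := by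
    intro t ht
    rw [show S t = sSup (b '' Icc 0 (min t T)) from rfl, min_eq_left ht.2]
    refine csSup_le ⟨b 0, 0, ⟨le_rfl, ht.1⟩, rfl⟩ ?_
    rintro _ ⟨s, hs, rfl⟩
    have hsT : s ∈ Icc (0:ℝ) T := ⟨hs.1, hs.2.trans ht.2⟩
    calc b s ≤ K * ∫ r in (0:ℝ)..s, S r := hkey s hsT
      _ ≤ K * ∫ r in (0:ℝ)..t, S r := by
          refine mul_le_mul_of_nonneg_left ?_ hK0
          refine intervalIntegral.integral_mono_interval le_rfl hs.1 hs.2 ?_ (hSint 0 t)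
          exact Filter.Eventually.of_forall fun r => hSnonneg r
  -- Gronwall iteration
  have hiter : ∀ n : ℕ, ∀ t ∈ Icc (0:ℝ) T, S t ≤ M * (K * t) ^ n / n.factorial := by
    intro n
    induction n with
    | zero => intro t ht; simpa using hSM t
    | succ n ih =>
      intro t ht
      have hfn : ((n.factorial : ℝ)) ≠ 0 := by positivity
      have hn1 : ((n:ℝ) + 1) ≠ 0 := by positivity
      have h2 : (∫ s in (0:ℝ)..t, S s) ≤ ∫ s in (0:ℝ)..t, M * (K * s) ^ n / n.factorial :=
        integral_mono_on ht.1 (hSint 0 t)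
          (Continuous.intervalIntegrable (by continuity) 0 t)
          (fun s hs => ih s ⟨hs.1, hs.2.trans ht.2⟩)
      have h3 : (∫ s in (0:ℝ)..t, M * (K * s) ^ n / n.factorial)
          = (M * K ^ n / n.factorial) * (t ^ (n + 1) / (n + 1)) := by
        have he : ∀ s : ℝ, M * (K * s) ^ n / n.factorial = (M * K ^ n / n.factorial) * s ^ n := by
          intro s; rw [mul_pow]; ring
        simp_rw [he]
        rw [intervalIntegral.integral_const_mul, integral_pow]
        rw [zero_pow (Nat.succ_ne_zero n)]
        ring
      calc S t ≤ K * ∫ s in (0:ℝ)..t, S s := hSkey t ht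
        _ ≤ K * ((M * K ^ n / n.factorial) * (t ^ (n + 1) / (n + 1))) := by
            rw [← h3]; exact mul_le_mul_of_nonneg_left h2 hK0
        _ = M * (K * t) ^ (n + 1) / (n + 1).factorial := by
            rw [Nat.factorial_succ, mul_pow]
            push_cast
            field_simp
            ring
  have hSzero : ∀ t ∈ Icc (0:ℝ) T, S t = 0 := by
    intro t ht
    have hlim : Filter.Tendsto (fun n : ℕ => M * (K * t) ^ n / n.factorial)
        Filter.atTop (nhds 0) := by
      have h := (FloorSemiring.tendsto_pow_div_factorial_atTop (K * t)).const_mul M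
      rw [mul_zero] at h
      refine h.congr fun n => ?_
      ring
    have hle : S t ≤ 0 := ge_of_tendsto hlim (Filter.Eventually.of_forall fun n => hiter n t ht)
    exact le_antisymm hle (hSnonneg t)
  constructor
  · have h1 : sSup (b '' Icc 0 T) = 0 := by
      rw [← hSeq T ⟨hT.le, le_rfl⟩]
      exact hSzero T ⟨hT.le, le_rfl⟩
    have h2 : (∫ s in (0:ℝ)..T, sSup (b '' Icc 0 s)) = ∫ s in (0:ℝ)..T, (0:ℝ) := by
      apply intervalIntegral.integral_congr
      intro s hs
      rw [uIcc_of_le hT.le] at hs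
      dsimp only
      rw [← hSeq s hs]
      exact hSzero s hs
    rw [h1, h2]
    simp
  · intro t ht
    have h1 : b t ≤ S t := hbS t ht t ⟨ht.1, le_rfl⟩
    rw [hSzero t ht] at h1
    exact le_antisymm h1 (hnonneg t ht)
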